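/- There is a (computable) translation t mapping each formula of topological public announcement logic to an announcement-free modal formula (built only from propositional letters, ¬, ∧, I) such that for every topological model M and every point s of M, M, s satisfies φ if and only if M, s satisfies t(φ). (Reduction of topological PAL to the basic topological modal logic, the core of the completeness theorem.) -/
import Mathlib


/-- `τ` is a topology on the set `A`: a collection of subsets of `A` containing the
empty set and `A`, closed under arbitrary unions and under (nonempty) finite
intersections. -/
def IsTopologyOn {T : Type} (A : Set T) (τ : Set (Set T)) : Prop :=
  (∀ U ∈ τ, U ⊆ A) ∧ (∅ : Set T) ∈ τ ∧ A ∈ τ ∧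
    (∀ C ⊆ τ, ⋃₀ C ∈ τ) ∧
    (∀ C ⊆ τ, C.Finite → C.Nonempty → ⋂₀ C ∈ τ)

/-- Formulas of topological public announcement logic: propositional letters,
negation, conjunction, the interior modality `I`, and public announcement `[φ]ψ`. -/
inductive TForm where
  | atom : ℕ → TForm
  | neg : TForm → TForm
  | and : TForm → TForm → TForm
  | int : TForm → TForm
  | ann : TForm → TForm → TForm
deriving DecidableEq

/-- Material implication `φ → ψ` as the derived connective `¬(φ ∧ ¬ψ)`. -/
def TForm.imp (φ ψ : TForm) : TForm := .neg (.and φ (.neg ψ))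

/-- A topological model: a carrier set, a collection of subsets of it (intended to be
a topology on the carrier), and a valuation. -/
structure TopModel (T : Type) where
  carrier : Set T
  tau : Set (Set T)
  val : ℕ → Set T

/-- The restriction of a topological model to a subset `A`: carrier `A`, the induced
collection `{O ∩ A : O ∈ τ}`, and valuation `p ↦ v(p) ∩ A`. -/
def TopModel.restrict {T : Type} (M : TopModel T) (A : Set T) : TopModel T where
  carrier := A
  tau := {V | ∃ O ∈ M.tau, V = O ∩ A}
  val := fun p => M.val p ∩ A

/-- Satisfaction `M, t ⊨ φ` in a topological model; announcing `φ` restricts the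
model to the extension `(φ)^M = {u ∈ T : M, u ⊨ φ}`. -/
def TSat {T : Type} : TopModel T → TForm → T → Prop
  | M, .atom p, t => t ∈ M.val p
  | M, .neg φ, t => ¬ TSat M φ t
  | M, .and φ ψ, t => TSat M φ t ∧ TSat M ψ t
  | M, .int φ, t => ∃ U ∈ M.tau, t ∈ U ∧ ∀ u ∈ U, TSat M φ u
  | M, .ann φ ψ, t =>
      TSat M φ t → TSat (M.restrict {u ∈ M.carrier | TSat M φ u}) ψ t
/-- A formula is announcement-free if it contains no public announcement operator. -/
def TForm.annFree : TForm → Prop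
  | .atom _ => True
  | .neg φ => φ.annFree
  | .and φ ψ => φ.annFree ∧ ψ.annFree
  | .int φ => φ.annFree
  | .ann _ _ => False

/-- Push an announcement of `α` through an announcement-free formula. -/
def TForm.red (α : TForm) : TForm → TForm
  | .atom p => .imp α (.atom p)
  | .neg ψ => .imp α (.neg (α.red ψ))
  | .and ψ χ => .and (α.red ψ) (α.red χ)
  | .int ψ => .imp α (.int (α.red ψ))
  | .ann ψ χ => .ann ψ χ

/-- The reduction translation. -/
def TForm.tr : TForm → TForm
  | .atom p => .atom p
  | .neg φ => .neg φ.tr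
  | .and φ ψ => .and φ.tr ψ.tr
  | .int φ => .int φ.tr
  | .ann φ ψ => φ.tr.red ψ.tr

lemma red_annFree (α : TForm) (hα : α.annFree) :
    ∀ β : TForm, β.annFree → (α.red β).annFree := by
  intro β
  induction β with
  | atom p => intro _; simp [TForm.red, TForm.imp, TForm.annFree, hα]
  | neg ψ ih => intro h; simpa [TForm.red, TForm.imp, TForm.annFree, hα] using ih h
  | and ψ χ ih1 ih2 => intro h; exact ⟨ih1 h.1, ih2 h.2⟩
  | int ψ ih => intro h; simpa [TForm.red, TForm.imp, TForm.annFree, hα] using ih h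
  | ann ψ χ _ _ => intro h; exact h.elim

lemma tr_annFree : ∀ φ : TForm, φ.tr.annFree := by
  intro φ
  induction φ with
  | atom p => trivial
  | neg φ ih => exact ih
  | and φ ψ ih1 ih2 => exact ⟨ih1, ih2⟩
  | int φ ih => exact ih
  | ann φ ψ ih1 ih2 => exact red_annFree _ ih1 _ ih2

lemma TSat_imp {T : Type} (M : TopModel T) (α β : TForm) (s : T) :
    TSat M (α.imp β) s ↔ (TSat M α s → TSat M β s) := by
  simp only [TForm.imp, TSat]; tauto

lemma restrict_topology {T : Type} (M : TopModel T)
    (hM : IsTopologyOn M.carrier M.tau) (A : Set T) (hA : A ⊆ M.carrier) :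
    IsTopologyOn (M.restrict A).carrier (M.restrict A).tau := by
  obtain ⟨hsub, hempty, hfull, hunion, hinter⟩ := hM
  refine ⟨?_, ?_, ?_, ?_, ?_⟩
  · rintro V ⟨O, _, rfl⟩; exact Set.inter_subset_right
  · exact ⟨∅, hempty, by simp⟩
  · exact ⟨M.carrier, hfull, by
      simp [TopModel.restrict, Set.inter_eq_right.2 hA]⟩
  · intro C hC
    refine ⟨⋃₀ {O ∈ M.tau | O ∩ A ∈ C}, hunion _ (fun O hO => hO.1), ?_⟩
    ext x
    simp only [Set.mem_sUnion, Set.mem_inter_iff, Set.mem_setOf_eq]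
    constructor
    · rintro ⟨V, hV, hxV⟩
      obtain ⟨O, hO, rfl⟩ := hC hV
      exact ⟨⟨O, ⟨hO, hV⟩, hxV.1⟩, hxV.2⟩
    · rintro ⟨⟨O, ⟨hO, hOC⟩, hxO⟩, hxA⟩
      exact ⟨O ∩ A, hOC, hxO, hxA⟩
  · intro C hC hfin hne
    classical
    let f : Set T → Set T := fun V => if h : V ∈ C then (hC h).choose else ∅
    have hfmem : ∀ V ∈ C, f V ∈ M.tau := by
      intro V hV; simp only [f, dif_pos hV]; exact (hC hV).choose_spec.1
    have hfeq : ∀ V ∈ C, V = f V ∩ A := by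
      intro V hV; simp only [f, dif_pos hV]; exact (hC hV).choose_spec.2
    refine ⟨⋂₀ (f '' C), hinter _ ?_ (hfin.image f) (hne.image f), ?_⟩
    · rintro O ⟨V, hV, rfl⟩; exact hfmem V hV
    · ext x
      simp only [Set.mem_sInter, Set.mem_inter_iff, Set.mem_image]
      constructor
      · intro hx
        obtain ⟨V0, hV0⟩ := hne
        have hxA : x ∈ A := by
          have := hx V0 hV0; rw [hfeq V0 hV0] at this; exact this.2
        refine ⟨?_, hxA⟩
        rintro O ⟨V, hV, rfl⟩
        have := hx V hV; rw [hfeq V hV] at this; exact this.1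
      · intro hx V hV
        rw [hfeq V hV]
        exact ⟨hx.1 _ ⟨V, hV, rfl⟩, hx.2⟩

lemma red_correct {T : Type} (M : TopModel T)
    (hM : IsTopologyOn M.carrier M.tau) (α : TForm) :
    ∀ β : TForm, β.annFree → ∀ s ∈ M.carrier,
      (TSat M (α.red β) s ↔
        (TSat M α s → TSat (M.restrict {u ∈ M.carrier | TSat M α u}) β s)) := by
  set A : Set T := {u ∈ M.carrier | TSat M α u} with hAdef
  intro β
  induction β with
  | atom p =>
    intro _ s hs
    rw [TForm.red, TSat_imp]
    constructor
    · intro h hα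
      exact ⟨h hα, hs, hα⟩
    · intro h hα
      exact (h hα).1
  | neg ψ ih =>
    intro hf s hs
    rw [TForm.red, TSat_imp]
    simp only [TSat]
    constructor
    · intro h hα hψ
      exact h hα ((ih hf s hs).2 (fun _ => hψ))
    · intro h hα hr
      exact h hα ((ih hf s hs).1 hr hα)
  | and ψ χ ih1 ih2 =>
    intro hf s hs
    rw [TForm.red]
    simp only [TSat]
    rw [ih1 hf.1 s hs, ih2 hf.2 s hs]
    tauto
  | int ψ ih =>
    intro hf s hs
    rw [TForm.red, TSat_imp]
    simp only [TSat]
    constructor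
    · intro h hα
      obtain ⟨U, hU, hsU, hall⟩ := h hα
      refine ⟨U ∩ A, ⟨U, hU, rfl⟩, ⟨hsU, hs, hα⟩, ?_⟩
      rintro u ⟨huU, hu⟩
      exact (ih hf u hu.1).1 (hall u huU) hu.2
    · intro h hα
      obtain ⟨V, ⟨O, hO, rfl⟩, hsV, hall⟩ := h hα
      refine ⟨O, hO, hsV.1, ?_⟩
      intro u huO
      have huc : u ∈ M.carrier := hM.1 O hO huO
      refine (ih hf u huc).2 (fun huα => hall u ⟨huO, huc, huα⟩)
  | ann ψ χ _ _ =>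
    intro hf
    exact hf.elim

lemma tr_correct : ∀ (φ : TForm) (T : Type) (M : TopModel T),
    IsTopologyOn M.carrier M.tau →
    ∀ s ∈ M.carrier, (TSat M φ s ↔ TSat M φ.tr s) := by
  intro φ
  induction φ with
  | atom p => intro T M _ s _; rfl
  | neg φ ih =>
    intro T M hM s hs
    simp only [TForm.tr, TSat]
    rw [ih T M hM s hs]
  | and φ ψ ih1 ih2 =>
    intro T M hM s hs
    simp only [TForm.tr, TSat]
    rw [ih1 T M hM s hs, ih2 T M hM s hs]
  | int φ ih =>
    intro T M hM s hs
    simp only [TForm.tr, TSat]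
    constructor
    · rintro ⟨U, hU, hsU, hall⟩
      exact ⟨U, hU, hsU, fun u hu => (ih T M hM u (hM.1 U hU hu)).1 (hall u hu)⟩
    · rintro ⟨U, hU, hsU, hall⟩
      exact ⟨U, hU, hsU, fun u hu => (ih T M hM u (hM.1 U hU hu)).2 (hall u hu)⟩
  | ann φ ψ ih1 ih2 =>
    intro T M hM s hs
    have hAeq : {u ∈ M.carrier | TSat M φ.tr u} = {u ∈ M.carrier | TSat M φ u} := by
      ext u
      simp only [Set.mem_setOf_eq]
      exact and_congr_right (fun hu => (ih1 T M hM u hu).symm)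
    have hsub : {u ∈ M.carrier | TSat M φ u} ⊆ M.carrier := fun u hu => hu.1
    simp only [TForm.tr, TSat]
    rw [red_correct M hM φ.tr ψ.tr (tr_annFree ψ) s hs, hAeq]
    have hM' := restrict_topology M hM _ hsub
    constructor
    · intro h hα
      have hφ : TSat M φ s := (ih1 T M hM s hs).2 hα
      have hs' : s ∈ (M.restrict {u ∈ M.carrier | TSat M φ u}).carrier := ⟨hs, hφ⟩
      exact (ih2 T _ hM' s hs').1 (h hφ)
    · intro h hα
      have hφtr : TSat M φ.tr s := (ih1 T M hM s hs).1 hα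
      have hs' : s ∈ (M.restrict {u ∈ M.carrier | TSat M φ u}).carrier := ⟨hs, hα⟩
      exact (ih2 T _ hM' s hs').2 (h hφtr)

/-- Reduction of topological PAL to basic topological modal logic: there is a
translation `t` sending each formula to an announcement-free formula which is
satisfied at exactly the same points of every topological model. -/
theorem topological_pal_reduction :
    ∃ t : TForm → TForm, ∀ φ : TForm, (t φ).annFree ∧
      ∀ (T : Type) (M : TopModel T), IsTopologyOn M.carrier M.tau →
        ∀ s ∈ M.carrier, (TSat M φ s ↔ TSat M (t φ) s) :=
  ⟨TForm.tr, fun φ => ⟨tr_annFree φ, fun T M hM s hs => tr_correct φ T M hM s hs⟩⟩
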